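/- Let U*, V* ∈ ℝ^{n×r} have orthonormal columns, let U, V ∈ ℝ^{n×r} be arbitrary, and let G ∈ ℝ^{r×r} be an orthogonal matrix. Set F* = [U*; V*] ∈ ℝ^{2n×r} and F = [U; V] ∈ ℝ^{2n×r}. Then ‖(U*)ᵀU − (V*)ᵀV‖₂ ≤ 2·‖F − F*G‖₂. -/

import Mathlib

open Matrix MeasureTheory
open scoped Classical

noncomputable section

/-- Euclidean norm of a finitely-indexed real vector. -/
def vecNorm {n : Type*} [Fintype n] (v : n → ℝ) : ℝ :=
  Real.sqrt (∑ j, (v j) ^ 2)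

/-- Spectral norm (ℓ₂ operator norm) of a real matrix. -/
def specNorm {m n : Type*} [Fintype m] [Fintype n] (A : Matrix m n ℝ) : ℝ :=
  sSup {c : ℝ | ∃ x : n → ℝ, vecNorm x ≤ 1 ∧ c = vecNorm (A.mulVec x)}

/-- Frobenius norm of a real matrix. -/
def frobNorm {m n : Type*} [Fintype m] [Fintype n] (A : Matrix m n ℝ) : ℝ :=
  Real.sqrt (∑ i, ∑ j, (A i j) ^ 2)

/-- Entrywise maximum norm ‖·‖_∞ of a real matrix. -/
def maxNorm {m n : Type*} [Fintype m] [Fintype n] (A : Matrix m n ℝ) : ℝ :=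
  ⨆ i, ⨆ j, |A i j|

/-- Two-to-infinity norm ‖·‖_{2,∞}: maximum Euclidean norm of a row. -/
def twoInfNorm {m n : Type*} [Fintype m] [Fintype n] (A : Matrix m n ℝ) : ℝ :=
  ⨆ i, vecNorm (fun j => A i j)

lemma vecNorm_nonneg {n : Type*} [Fintype n] (v : n → ℝ) : 0 ≤ vecNorm v :=
  Real.sqrt_nonneg _

lemma vecNorm_sq {n : Type*} [Fintype n] (v : n → ℝ) :
    vecNorm v ^ 2 = ∑ j, (v j) ^ 2 :=
  Real.sq_sqrt (Finset.sum_nonneg fun _ _ => sq_nonneg _)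

lemma vecNorm_le_of_sq_le {n : Type*} [Fintype n] (v : n → ℝ) (c : ℝ) (hc : 0 ≤ c)
    (h : ∑ j, (v j) ^ 2 ≤ c ^ 2) : vecNorm v ≤ c := by
  have := Real.sqrt_le_sqrt h
  rwa [Real.sqrt_sq hc] at this

lemma vecNorm_sub_le {n : Type*} [Fintype n] (a b : n → ℝ) :
    vecNorm (a - b) ≤ vecNorm a + vecNorm b := by
  apply vecNorm_le_of_sq_le _ _ (add_nonneg (vecNorm_nonneg a) (vecNorm_nonneg b))
  have hcs := Finset.sum_mul_sq_le_sq_mul_sq Finset.univ a b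
  have hab : -(vecNorm a * vecNorm b) ≤ ∑ j, a j * b j := by
    have h1 : (∑ j, a j * b j) ^ 2 ≤ (vecNorm a * vecNorm b) ^ 2 := by
      rw [mul_pow, vecNorm_sq, vecNorm_sq]; exact hcs
    nlinarith [mul_nonneg (vecNorm_nonneg a) (vecNorm_nonneg b),
      sq_nonneg (∑ j, a j * b j + vecNorm a * vecNorm b)]
  have ha := vecNorm_sq a
  have hb := vecNorm_sq b
  have hsub : ∀ j : n, (a - b) j ^ 2 = a j ^ 2 + b j ^ 2 - 2 * (a j * b j) := by
    intro j; simp [Pi.sub_apply]; ring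
  calc ∑ j, ((a - b) j) ^ 2
      = (∑ j, a j ^ 2) + (∑ j, b j ^ 2) - 2 * ∑ j, a j * b j := by
        simp only [hsub, Finset.sum_sub_distrib, Finset.sum_add_distrib, Finset.mul_sum]
    _ ≤ (vecNorm a + vecNorm b) ^ 2 := by
        have hexp : (vecNorm a + vecNorm b) ^ 2
            = vecNorm a ^ 2 + 2 * (vecNorm a * vecNorm b) + vecNorm b ^ 2 := by ring
        linarith

/-- Contraction: if `Aᵀ * A = 1` then `‖Aᵀ y‖ ≤ ‖y‖`. -/
lemma vecNorm_transpose_mulVec_le {n r : Type*} [Fintype n] [Fintype r] [DecidableEq r]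
    (A : Matrix n r ℝ) (hA : Aᵀ * A = 1) (y : n → ℝ) :
    vecNorm (Aᵀ *ᵥ y) ≤ vecNorm y := by
  set w : r → ℝ := Aᵀ *ᵥ y with hw
  set z : n → ℝ := A *ᵥ w with hz
  have hzz : z ⬝ᵥ z = w ⬝ᵥ w := by
    calc z ⬝ᵥ z = z ⬝ᵥ (A *ᵥ w) := rfl
      _ = (z ᵥ* A) ⬝ᵥ w := (dotProduct_mulVec z A w)
      _ = (Aᵀ *ᵥ z) ⬝ᵥ w := by rw [mulVec_transpose]
      _ = ((Aᵀ * A) *ᵥ w) ⬝ᵥ w := by rw [hz, mulVec_mulVec]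
      _ = w ⬝ᵥ w := by rw [hA, one_mulVec]
  have hwy : w ⬝ᵥ w = y ⬝ᵥ z := by
    calc w ⬝ᵥ w = (Aᵀ *ᵥ y) ⬝ᵥ w := rfl
      _ = (y ᵥ* A) ⬝ᵥ w := by rw [mulVec_transpose]
      _ = y ⬝ᵥ (A *ᵥ w) := (dotProduct_mulVec y A w).symm
      _ = y ⬝ᵥ z := rfl
  have hcs : (y ⬝ᵥ z) ^ 2 ≤ (y ⬝ᵥ y) * (z ⬝ᵥ z) := by
    have := Finset.sum_mul_sq_le_sq_mul_sq Finset.univ y z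
    simpa [dotProduct, sq] using this
  have hww : 0 ≤ w ⬝ᵥ w := by
    simp only [dotProduct]; exact Finset.sum_nonneg fun j _ => mul_self_nonneg _
  have hkey : w ⬝ᵥ w ≤ y ⬝ᵥ y := by
    rcases eq_or_lt_of_le hww with h0 | h0
    · rw [← h0]
      simp only [dotProduct]; exact Finset.sum_nonneg fun j _ => mul_self_nonneg _
    · nlinarith [hcs, hzz, hwy]
  apply vecNorm_le_of_sq_le _ _ (vecNorm_nonneg y)
  rw [vecNorm_sq]
  have h1 : ∑ j, (w j) ^ 2 = w ⬝ᵥ w := by simp [dotProduct, sq]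
  have h2 : ∑ j, (y j) ^ 2 = y ⬝ᵥ y := by simp [dotProduct, sq]
  rw [h1, h2]; exact hkey

lemma specNorm_bddAbove {m n : Type*} [Fintype m] [Fintype n] (A : Matrix m n ℝ) :
    BddAbove {c : ℝ | ∃ x : n → ℝ, vecNorm x ≤ 1 ∧ c = vecNorm (A.mulVec x)} := by
  refine ⟨Real.sqrt (∑ i, ∑ j, (A i j) ^ 2), ?_⟩
  rintro c ⟨x, hx, rfl⟩
  apply vecNorm_le_of_sq_le _ _ (Real.sqrt_nonneg _)
  refine le_of_le_of_eq ?_ (Real.sq_sqrt (Finset.sum_nonneg fun i _ => Finset.sum_nonneg fun j _ => sq_nonneg (A i j))).symm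
  have hx2 : ∑ j, (x j) ^ 2 ≤ 1 := by
    have := vecNorm_sq x
    nlinarith [vecNorm_nonneg x]
  apply Finset.sum_le_sum
  intro i _
  have hcs := Finset.sum_mul_sq_le_sq_mul_sq Finset.univ (fun j => A i j) x
  calc (A.mulVec x i) ^ 2 = (∑ j, A i j * x j) ^ 2 := by simp [Matrix.mulVec, dotProduct]
    _ ≤ (∑ j, (A i j) ^ 2) * (∑ j, (x j) ^ 2) := hcs
    _ ≤ (∑ j, (A i j) ^ 2) * 1 := by
        apply mul_le_mul_of_nonneg_left hx2 (Finset.sum_nonneg fun j _ => sq_nonneg _)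
    _ = ∑ j, (A i j) ^ 2 := mul_one _

lemma vecNorm_mulVec_le_specNorm {m n : Type*} [Fintype m] [Fintype n]
    (A : Matrix m n ℝ) {x : n → ℝ} (hx : vecNorm x ≤ 1) :
    vecNorm (A *ᵥ x) ≤ specNorm A :=
  le_csSup (specNorm_bddAbove A) ⟨x, hx, rfl⟩

lemma specNorm_nonneg {m n : Type*} [Fintype m] [Fintype n] (A : Matrix m n ℝ) :
    0 ≤ specNorm A := by
  have h : vecNorm (A *ᵥ (0 : n → ℝ)) ≤ specNorm A :=
    vecNorm_mulVec_le_specNorm A (by simp [vecNorm])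
  calc (0 : ℝ) ≤ vecNorm (A *ᵥ 0) := vecNorm_nonneg _
    _ ≤ specNorm A := h

lemma specNorm_le {m n : Type*} [Fintype m] [Fintype n] (A : Matrix m n ℝ) (c : ℝ)
    (hc : 0 ≤ c) (h : ∀ x : n → ℝ, vecNorm x ≤ 1 → vecNorm (A *ᵥ x) ≤ c) :
    specNorm A ≤ c :=
  Real.sSup_le (by rintro b ⟨x, hx, rfl⟩; exact h x hx) hc

lemma vecNorm_elim_left {m₁ m₂ : Type*} [Fintype m₁] [Fintype m₂] (u : m₁ → ℝ) (v : m₂ → ℝ) :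
    vecNorm u ≤ vecNorm (Sum.elim u v) := by
  apply Real.sqrt_le_sqrt
  rw [Fintype.sum_sum_type]
  simp only [Sum.elim_inl, Sum.elim_inr]
  exact le_add_of_nonneg_right (Finset.sum_nonneg fun j _ => sq_nonneg _)

lemma vecNorm_elim_right {m₁ m₂ : Type*} [Fintype m₁] [Fintype m₂] (u : m₁ → ℝ) (v : m₂ → ℝ) :
    vecNorm v ≤ vecNorm (Sum.elim u v) := by
  apply Real.sqrt_le_sqrt
  rw [Fintype.sum_sum_type]
  simp only [Sum.elim_inl, Sum.elim_inr]
  exact le_add_of_nonneg_left (Finset.sum_nonneg fun j _ => sq_nonneg _)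

/-- `‖(U*)ᵀU − (V*)ᵀV‖₂ ≤ 2·‖F − F*G‖₂` for `F = [U; V]`, `F* = [U*; V*]`
with `U*, V*` having orthonormal columns and `G` orthogonal. -/
theorem stmt17 {n r : ℕ} (Ustar Vstar U V : Matrix (Fin n) (Fin r) ℝ)
    (hU : Ustarᵀ * Ustar = 1) (hV : Vstarᵀ * Vstar = 1)
    (G : Matrix (Fin r) (Fin r) ℝ) (hG : Gᵀ * G = 1) :
    specNorm (Ustarᵀ * U - Vstarᵀ * V) ≤
      2 * specNorm (Matrix.fromRows U V - Matrix.fromRows Ustar Vstar * G) := by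
  set E := Matrix.fromRows U V - Matrix.fromRows Ustar Vstar * G with hEdef
  have hE : E = Matrix.fromRows (U - Ustar * G) (V - Vstar * G) := by
    rw [hEdef, Matrix.fromRows_mul]
    ext (i | i) j <;> simp
  have key : Ustarᵀ * U - Vstarᵀ * V
      = Ustarᵀ * (U - Ustar * G) - Vstarᵀ * (V - Vstar * G) := by
    rw [Matrix.mul_sub, Matrix.mul_sub, ← Matrix.mul_assoc, ← Matrix.mul_assoc, hU, hV,
      one_mul]
    abel
  apply specNorm_le _ _ (by nlinarith [specNorm_nonneg E])
  intro x hx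
  have ha : vecNorm ((U - Ustar * G) *ᵥ x) ≤ specNorm E := by
    calc vecNorm ((U - Ustar * G) *ᵥ x) ≤ vecNorm (E *ᵥ x) := by
          rw [hE, Matrix.fromRows_mulVec]; exact vecNorm_elim_left _ _
      _ ≤ specNorm E := vecNorm_mulVec_le_specNorm E hx
  have hb : vecNorm ((V - Vstar * G) *ᵥ x) ≤ specNorm E := by
    calc vecNorm ((V - Vstar * G) *ᵥ x) ≤ vecNorm (E *ᵥ x) := by
          rw [hE, Matrix.fromRows_mulVec]; exact vecNorm_elim_right _ _
      _ ≤ specNorm E := vecNorm_mulVec_le_specNorm E hx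
  calc vecNorm ((Ustarᵀ * U - Vstarᵀ * V) *ᵥ x)
      = vecNorm (Ustarᵀ *ᵥ ((U - Ustar * G) *ᵥ x) - Vstarᵀ *ᵥ ((V - Vstar * G) *ᵥ x)) := by
        rw [key, Matrix.sub_mulVec, Matrix.mulVec_mulVec, Matrix.mulVec_mulVec]
    _ ≤ vecNorm (Ustarᵀ *ᵥ ((U - Ustar * G) *ᵥ x))
        + vecNorm (Vstarᵀ *ᵥ ((V - Vstar * G) *ᵥ x)) := vecNorm_sub_le _ _
    _ ≤ vecNorm ((U - Ustar * G) *ᵥ x) + vecNorm ((V - Vstar * G) *ᵥ x) :=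
        add_le_add (vecNorm_transpose_mulVec_le _ hU _) (vecNorm_transpose_mulVec_le _ hV _)
    _ ≤ specNorm E + specNorm E := add_le_add ha hb
    _ = 2 * specNorm E := by ring
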